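/- Let a, b be positive semidefinite n×n matrices and q an orthogonal projection. Then tr(√(q |ab|² q)) ≥ tr(|ab| q). -/

import Mathlib

open Matrix ComplexOrder

/-- The positive semidefinite square root of a positive semidefinite matrix
(the definition `Matrix.PosSemidef.sqrt` of the older Mathlib, since removed). -/
noncomputable def Matrix.PosSemidef.sqrt {n : Type*} [Fintype n] [DecidableEq n]
    {𝕜 : Type*} [RCLike 𝕜] {A : Matrix n n 𝕜} (hA : A.PosSemidef) : Matrix n n 𝕜 :=
  hA.1.eigenvectorUnitary.1 * diagonal ((↑) ∘ (Real.sqrt ∘ hA.1.eigenvalues)) *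
  (star hA.1.eigenvectorUnitary : Matrix n n 𝕜)

lemma Matrix.PosSemidef.posSemidef_sqrt {n : Type*} [Fintype n] [DecidableEq n]
    {𝕜 : Type*} [RCLike 𝕜] {A : Matrix n n 𝕜} (hA : A.PosSemidef) : hA.sqrt.PosSemidef := by
  unfold Matrix.PosSemidef.sqrt
  have hd : (diagonal ((↑) ∘ (Real.sqrt ∘ hA.1.eigenvalues)) : Matrix n n 𝕜).PosSemidef := by
    apply PosSemidef.diagonal
    intro i
    simp only [Pi.zero_apply, Function.comp_apply]
    exact RCLike.ofReal_nonneg.mpr (Real.sqrt_nonneg _)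
  have := hd.mul_mul_conjTranspose_same (hA.1.eigenvectorUnitary.1)
  rwa [← Matrix.star_eq_conjTranspose] at this

lemma Matrix.PosSemidef.sq_sqrt {n : Type*} [Fintype n] [DecidableEq n]
    {𝕜 : Type*} [RCLike 𝕜] {A : Matrix n n 𝕜} (hA : A.PosSemidef) : hA.sqrt ^ 2 = A := by
  unfold Matrix.PosSemidef.sqrt
  have hU : (star hA.1.eigenvectorUnitary : Matrix n n 𝕜) * hA.1.eigenvectorUnitary.1 = 1 :=
    Unitary.coe_star_mul_self _
  conv_rhs => rw [hA.1.spectral_theorem, Unitary.conjStarAlgAut_apply]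
  rw [pow_two]
  calc _ = hA.1.eigenvectorUnitary.1 * (diagonal ((↑) ∘ (Real.sqrt ∘ hA.1.eigenvalues)) *
        ((star hA.1.eigenvectorUnitary : Matrix n n 𝕜) * hA.1.eigenvectorUnitary.1) *
        diagonal ((↑) ∘ (Real.sqrt ∘ hA.1.eigenvalues))) *
        (star hA.1.eigenvectorUnitary : Matrix n n 𝕜) := by simp only [mul_assoc]
    _ = _ := by
      rw [hU, mul_one, diagonal_mul_diagonal]
      congr 3
      funext i
      simp only [Function.comp_apply]
      rw [← RCLike.ofReal_mul, Real.mul_self_sqrt (hA.eigenvalues_nonneg i)]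

variable {n : Type*} [Fintype n] [DecidableEq n]

/-- The modulus `|x| = (xᴴ x)^{1/2}` of a square complex matrix. -/
noncomputable def matAbs (x : Matrix n n ℂ) : Matrix n n ℂ :=
  (Matrix.posSemidef_conjTranspose_mul_self x).sqrt

/-- If `A, S ≥ 0` and `A² ≤ S²`, then `Re tr A ≤ Re tr S`. -/
lemma aux_trace_re_le {d : ℕ} {A S : Matrix (Fin d) (Fin d) ℂ}
    (hA : A.PosSemidef) (hS : S.PosSemidef)
    (h : (S * S - A * A).PosSemidef) : (A.trace).re ≤ (S.trace).re := by
  by_contra hlt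
  push_neg at hlt
  set D := A - S with hDdef
  have hD : D.IsHermitian := hA.1.sub hS.1
  have htr : D.trace = ∑ i, (hD.eigenvalues i : ℂ) := by
    conv_lhs => rw [hD.spectral_theorem]
    rw [Unitary.conjStarAlgAut_apply, Matrix.trace_mul_cycle, Unitary.coe_star_mul_self, one_mul, trace_diagonal]
    simp
  have hsumpos : 0 < ∑ i, hD.eigenvalues i := by
    have : D.trace.re = ∑ i, hD.eigenvalues i := by
      rw [htr]; simp
    have hre : D.trace.re = A.trace.re - S.trace.re := by
      rw [hDdef, trace_sub, Complex.sub_re]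
    rw [← this, hre]
    linarith
  obtain ⟨i, hi⟩ : ∃ i, 0 < hD.eigenvalues i := by
    by_contra hc
    push_neg at hc
    exact absurd (Finset.sum_nonpos (fun i _ => hc i)) (not_le.mpr hsumpos)
  set t := hD.eigenvalues i with htdef
  set v := ⇑(hD.eigenvectorBasis i) with hvdef
  have hv : D *ᵥ v = (t : ℂ) • v := by
    rw [hvdef, hD.mulVec_eigenvectorBasis]
    ext j
    simp [Complex.real_smul, htdef]
  have hnv : star v ⬝ᵥ v = 1 := by
    have h1 : ‖hD.eigenvectorBasis i‖ = 1 := hD.eigenvectorBasis.orthonormal.1 i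
    have h2 : (inner ℂ (hD.eigenvectorBasis i) (hD.eigenvectorBasis i) : ℂ) = 1 := by
      rw [inner_self_eq_norm_sq_to_K, h1]; norm_num
    rw [EuclideanSpace.inner_eq_star_dotProduct, dotProduct_comm] at h2
    exact h2
  have hvD : star v ᵥ* D = (t : ℂ) • star v := by
    calc star v ᵥ* D = star v ᵥ* Dᴴᴴ := by rw [conjTranspose_conjTranspose]
      _ = star (Dᴴ *ᵥ v) := (star_mulVec _ _).symm
      _ = star (D *ᵥ v) := by rw [hD.eq]
      _ = star ((t : ℂ) • v) := by rw [hv]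
      _ = (t : ℂ) • star v := by
          rw [star_smul]
          congr 1
          simp [Complex.star_def, Complex.conj_ofReal]
  set α := star v ⬝ᵥ A *ᵥ v with hαdef
  set β := star v ⬝ᵥ S *ᵥ v with hβdef
  have key1 : α - β = (t : ℂ) := by
    have : star v ⬝ᵥ D *ᵥ v = (t : ℂ) := by
      rw [hv, dotProduct_smul, hnv, smul_eq_mul, mul_one]
    rw [hDdef, sub_mulVec, dotProduct_sub] at this
    exact this
  have hmain : star v ⬝ᵥ (A * A - S * S) *ᵥ v = (t : ℂ) * (α + β) := by
    have hsplit : A * A - S * S = A * D + D * S := by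
      rw [hDdef]; noncomm_ring
    rw [hsplit, add_mulVec, dotProduct_add]
    have h1 : star v ⬝ᵥ (A * D) *ᵥ v = (t : ℂ) * α := by
      rw [← mulVec_mulVec, hv, mulVec_smul, dotProduct_smul, smul_eq_mul]
    have h2 : star v ⬝ᵥ (D * S) *ᵥ v = (t : ℂ) * β := by
      rw [← mulVec_mulVec, dotProduct_mulVec, hvD, smul_dotProduct, smul_eq_mul]
    rw [h1, h2, mul_add]
  have hα : 0 ≤ α.re ∧ 0 = α.im := Complex.nonneg_iff.mp (hA.dotProduct_mulVec_nonneg v)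
  have hβ : 0 ≤ β.re ∧ 0 = β.im := Complex.nonneg_iff.mp (hS.dotProduct_mulVec_nonneg v)
  have hkey1re : α.re - β.re = t := by
    have := congrArg Complex.re key1
    simpa using this
  have hneg : ((t : ℂ) * (α + β)).re ≤ 0 := by
    have h0 : 0 ≤ star v ⬝ᵥ (S * S - A * A) *ᵥ v := h.dotProduct_mulVec_nonneg v
    have h0re : 0 ≤ (star v ⬝ᵥ (S * S - A * A) *ᵥ v).re := (Complex.nonneg_iff.mp h0).1
    have hneg' : star v ⬝ᵥ (S * S - A * A) *ᵥ v = -((t : ℂ) * (α + β)) := by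
      rw [← hmain]
      rw [show S * S - A * A = -(A * A - S * S) from (neg_sub _ _).symm, neg_mulVec, dotProduct_neg]
    rw [hneg'] at h0re
    simp only [Complex.neg_re] at h0re
    linarith
  have hcomp : ((t : ℂ) * (α + β)).re = t * (α.re + β.re) := by
    simp [Complex.mul_re, Complex.add_re, Complex.add_im, ← hα.2, ← hβ.2]
  rw [hcomp] at hneg
  have hαpos : 0 < α.re + β.re := by
    have : t ≤ α.re := by linarith [hβ.1, hkey1re]
    linarith [hβ.1]
  nlinarith

set_option maxHeartbeats 1000000 in
/-- for `a, b ≥ 0` and an orthogonal projection `q`,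
`tr √(q |ab|² q) ≥ tr (|ab| q)`. -/
theorem trace_sqrt_sandwich_ge {d : ℕ} (a b q : Matrix (Fin d) (Fin d) ℂ)
    (ha : a.PosSemidef) (hb : b.PosSemidef)
    (hq1 : qᴴ = q) (hq2 : q * q = q)
    (hS : (q * (matAbs (a * b) * matAbs (a * b)) * q).PosSemidef) :
    ((matAbs (a * b) * q).trace).re ≤ (hS.sqrt.trace).re := by
  set m := matAbs (a * b) with hmdef
  have hm : m.PosSemidef := (Matrix.posSemidef_conjTranspose_mul_self (a * b)).posSemidef_sqrt
  -- A := q * m * q is PSD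
  have hA : (q * m * q).PosSemidef := by
    have := hm.mul_mul_conjTranspose_same q
    rwa [hq1] at this
  -- S := sqrt of sandwiched square
  set S := hS.sqrt with hSdef
  have hSp : S.PosSemidef := hS.posSemidef_sqrt
  have hSsq : S * S = q * (m * m) * q := by
    have := hS.sq_sqrt
    rwa [pow_two] at this
  -- S² - A² = Xᴴ X is PSD
  have hq2' : ∀ x : Matrix (Fin d) (Fin d) ℂ, q * (q * x) = q * x := fun x => by
    rw [← mul_assoc, hq2]
  have hfact : S * S - (q * m * q) * (q * m * q)
      = ((1 - q) * (m * q))ᴴ * ((1 - q) * (m * q)) := by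
    rw [hSsq]
    simp only [conjTranspose_mul, conjTranspose_sub, conjTranspose_one, hq1, hm.1.eq]
    simp only [Matrix.sub_mul, Matrix.mul_sub, Matrix.one_mul, Matrix.mul_one,
      Matrix.mul_assoc, hq2']
    abel
  have hsub : (S * S - (q * m * q) * (q * m * q)).PosSemidef := by
    rw [hfact]
    exact posSemidef_conjTranspose_mul_self _
  have hle : ((q * m * q).trace).re ≤ (S.trace).re := aux_trace_re_le hA hSp hsub
  have htr : (m * q).trace = (q * m * q).trace := by
    rw [trace_mul_cycle, hq2, trace_mul_comm]
  rw [htr]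
  exact hle
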